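/- In the graph B (complete bipartite core with perturbed unit capacities), for every arc e = {x_i, y_j}, the vitality of e satisfies 0 < flowVit(e) < 1. In particular all k² bipartite arcs have nontrivial vitality: 0 < flowVit(e) < c(e). -/

import Mathlib

open Finset

/-- Capacity of the s-t cut determined by `S` (arcs from `S` to its complement). -/
def cutCap {V : Type*} [Fintype V] [DecidableEq V] (c : V → V → ℝ) (S : Finset V) : ℝ :=
  ∑ x ∈ S, ∑ y ∈ Sᶜ, c x y

/-- Minimum capacity of an s-t cut. -/
noncomputable def minCut {V : Type*} [Fintype V] [DecidableEq V] (c : V → V → ℝ)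
    (s t : V) : ℝ :=
  sInf {r | ∃ S : Finset V, s ∈ S ∧ t ∉ S ∧ r = cutCap c S}

/-- Nodes of the graph `B`: source `s`, sink `t`, and the bipartite core `x₁,…,x_k`,
`y₁,…,y_k`. -/
inductive BNode (k : ℕ) : Type
  | s : BNode k
  | t : BNode k
  | x : Fin k → BNode k
  | y : Fin k → BNode k
  deriving DecidableEq, Fintype

/-- The (symmetric) capacity function of the graph `B`: edges `{s, xᵢ}` and `{yⱼ, t}`
of capacity `k`, and edges `{xᵢ, yⱼ}` of capacity `1 + ε i j`. -/
def Bcap (k : ℕ) (ε : Fin k → Fin k → ℝ) : BNode k → BNode k → ℝ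
  | .s, .x _ => k
  | .x _, .s => k
  | .t, .y _ => k
  | .y _, .t => k
  | .x i, .y j => 1 + ε i j
  | .y j, .x i => 1 + ε i j
  | _, _ => 0

/-- The graph with arc `e` deleted (its capacity set to `0`). -/
def delArc {V : Type*} [DecidableEq V] (c : V → V → ℝ) (e : V × V) : V → V → ℝ :=
  fun x y => if (x, y) = e then 0 else c x y



def genCap (k : ℕ) (w : Fin k → Fin k → ℝ) : BNode k → BNode k → ℝ
  | .s, .x _ => k
  | .x _, .s => k
  | .t, .y _ => k
  | .y _, .t => k
  | .x i, .y j => w i j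
  | .y j, .x i => w i j
  | _, _ => 0

def bEquiv (k : ℕ) : (Unit ⊕ Unit) ⊕ (Fin k ⊕ Fin k) ≃ BNode k where
  toFun := fun a => match a with
    | .inl (.inl _) => .s
    | .inl (.inr _) => .t
    | .inr (.inl i) => .x i
    | .inr (.inr i) => .y i
  invFun := fun v => match v with
    | .s => .inl (.inl ())
    | .t => .inl (.inr ())
    | .x i => .inr (.inl i)
    | .y i => .inr (.inr i)
  left_inv := by rintro ((_|_)|(i|i)) <;> rfl
  right_inv := by rintro (_|_|i|i) <;> rfl

lemma sum_bnode {k : ℕ} (f : BNode k → ℝ) :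
    ∑ v, f v = f .s + f .t + ∑ i, f (.x i) + ∑ i, f (.y i) := by
  rw [← Equiv.sum_comp (bEquiv k) f]
  simp [bEquiv, Fintype.sum_sum_type]
  ring

lemma cutCap_gen {k : ℕ} (w : Fin k → Fin k → ℝ) (S : Finset (BNode k))
    (hs : BNode.s ∈ S) (ht : BNode.t ∉ S) :
    cutCap (genCap k w) S =
      k * (((univ.filter fun i : Fin k => BNode.x i ∈ S)ᶜ).card : ℝ) +
      k * (((univ.filter fun j : Fin k => BNode.y j ∈ S)).card : ℝ) +
      (∑ i' ∈ univ.filter (fun i : Fin k => BNode.x i ∈ S),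
        ∑ j' ∈ (univ.filter fun j : Fin k => BNode.y j ∈ S)ᶜ, w i' j') +
      (∑ j' ∈ univ.filter (fun j : Fin k => BNode.y j ∈ S),
        ∑ i' ∈ (univ.filter fun i : Fin k => BNode.x i ∈ S)ᶜ, w i' j') := by
  have key : ∀ (T : Finset (BNode k)) (g : BNode k → ℝ),
      ∑ v ∈ T, g v = ∑ v : BNode k, if v ∈ T then g v else 0 := by
    intro T g
    rw [Finset.sum_ite_mem, Finset.univ_inter]
  unfold cutCap
  rw [key S, sum_bnode]
  have inner : ∀ v : BNode k, ∑ y ∈ Sᶜ, genCap k w v y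
      = ∑ u : BNode k, if u ∈ S then 0 else genCap k w v u := by
    intro v
    rw [key Sᶜ]
    refine Finset.sum_congr rfl fun u _ => ?_
    by_cases h : u ∈ S <;> simp [h]
  simp only [inner, sum_bnode, hs, ht, if_true, if_false]
  simp only [genCap]
  simp only [Finset.compl_filter, Finset.sum_filter, Finset.card_filter, Nat.cast_sum,
    Finset.mul_sum, Finset.sum_const_zero, add_zero, zero_add, mul_ite, mul_one, mul_zero]
  push_cast
  simp only [← Finset.sum_add_distrib]
  refine Finset.sum_congr rfl fun a _ => ?_
  by_cases hx : BNode.x a ∈ S <;> by_cases hy : BNode.y a ∈ S <;>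
    simp [hx, hy, ite_not] <;> ring

lemma Bcap_eq_gen (k : ℕ) (ε : Fin k → Fin k → ℝ) :
    Bcap k ε = genCap k (fun i j => 1 + ε i j) := by
  funext a b; cases a <;> cases b <;> rfl

lemma del_eq_gen (k : ℕ) (ε : Fin k → Fin k → ℝ) (i j : Fin k) :
    delArc (delArc (Bcap k ε) (BNode.x i, BNode.y j)) (BNode.y j, BNode.x i)
      = genCap k (fun i' j' => if i' = i ∧ j' = j then 0 else 1 + ε i' j') := by
  funext a b
  cases a <;> cases b <;> simp [delArc, Bcap, genCap, Prod.ext_iff] <;> aesop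

lemma sum_sub_single {α : Type*} [DecidableEq α] (s : Finset α) (f g : α → ℝ) (a : α)
    (h : ∀ b ∈ s, b ≠ a → f b = g b) :
    ∑ b ∈ s, f b = ∑ b ∈ s, g b - (if a ∈ s then g a - f a else 0) := by
  by_cases ha : a ∈ s
  · rw [if_pos ha, ← Finset.add_sum_erase s f ha, ← Finset.add_sum_erase s g ha,
      Finset.sum_congr rfl (fun b hb => h b (Finset.mem_of_mem_erase hb) (Finset.ne_of_mem_erase hb))]
    ring
  · rw [if_neg ha, sub_zero]
    exact Finset.sum_congr rfl fun b hb => h b hb (fun e => ha (e ▸ hb))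

lemma pair_le_sum {α : Type*} [DecidableEq α] {s : Finset α} {f : α → ℝ}
    (hf : ∀ a ∈ s, 0 ≤ f a) {p q : α} (hp : p ∈ s) (hq : q ∈ s) (hpq : p ≠ q) :
    f p + f q ≤ ∑ a ∈ s, f a := by
  rw [← Finset.sum_pair hpq]
  refine Finset.sum_le_sum_of_subset_of_nonneg ?_ (fun a ha _ => hf a ha)
  intro a ha
  simp only [Finset.mem_insert, Finset.mem_singleton] at ha
  rcases ha with rfl | rfl
  exacts [hp, hq]

lemma lower0 {k : ℕ} (ε : Fin k → Fin k → ℝ) (hε : ∀ i j, 0 ≤ ε i j)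
    (S : Finset (BNode k)) (hs : BNode.s ∈ S) (ht : BNode.t ∉ S) :
    (k : ℝ) * k ≤ cutCap (genCap k (fun i j => 1 + ε i j)) S := by
  rw [cutCap_gen _ S hs ht]
  set A := univ.filter fun i : Fin k => BNode.x i ∈ S with hA
  set B := univ.filter fun j : Fin k => BNode.y j ∈ S with hB
  have hAk : (A.card : ℝ) ≤ k := by
    exact_mod_cast (Finset.card_le_univ A).trans_eq (by simp)
  have hBk : (B.card : ℝ) ≤ k := by
    exact_mod_cast (Finset.card_le_univ B).trans_eq (by simp)
  have hAc : ((Aᶜ.card : ℕ) : ℝ) = k - A.card := by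
    rw [Finset.card_compl, Nat.cast_sub (by simpa using Finset.card_le_univ A)]
    simp
  have hBc : ((Bᶜ.card : ℕ) : ℝ) = k - B.card := by
    rw [Finset.card_compl, Nat.cast_sub (by simpa using Finset.card_le_univ B)]
    simp
  have h1 : (A.card : ℝ) * (k - B.card) ≤ ∑ i' ∈ A, ∑ j' ∈ Bᶜ, (1 + ε i' j') := by
    calc (A.card : ℝ) * (k - B.card) = ∑ i' ∈ A, ∑ j' ∈ Bᶜ, (1:ℝ) := by
          simp [Finset.sum_const, hBc]; ring
      _ ≤ _ := by
          refine Finset.sum_le_sum fun i' _ => Finset.sum_le_sum fun j' _ => ?_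
          linarith [hε i' j']
  have h2 : (B.card : ℝ) * (k - A.card) ≤ ∑ j' ∈ B, ∑ i' ∈ Aᶜ, (1 + ε i' j') := by
    calc (B.card : ℝ) * (k - A.card) = ∑ j' ∈ B, ∑ i' ∈ Aᶜ, (1:ℝ) := by
          simp [Finset.sum_const, hAc]; ring
      _ ≤ _ := by
          refine Finset.sum_le_sum fun j' _ => Finset.sum_le_sum fun i' _ => ?_
          linarith [hε i' j']
  rw [hAc]
  nlinarith [mul_nonneg (Nat.cast_nonneg' B.card : (0:ℝ) ≤ B.card)
    (by linarith : (0:ℝ) ≤ (k:ℝ) - A.card)]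

lemma lower1 {k : ℕ} (hk : 2 ≤ k) (ε : Fin k → Fin k → ℝ)
    (hε : ∀ i j, 0 < ε i j ∧ ε i j < 1 / k) (i j i₀ j₀ : Fin k)
    (hi₀ : i₀ ≠ i) (hj₀ : j₀ ≠ j)
    (S : Finset (BNode k)) (hs : BNode.s ∈ S) (ht : BNode.t ∉ S) :
    (k : ℝ) * k - 1 + min (ε i j₀) (ε i₀ j) ≤
      cutCap (genCap k (fun i' j' => if i' = i ∧ j' = j then 0 else 1 + ε i' j')) S := by
  have hεpos : ∀ a b, 0 < ε a b := fun a b => (hε a b).1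
  have hεlt : ∀ a b, ε a b < 1 := fun a b => by
    have := (hε a b).2
    have hk1 : (1:ℝ)/k ≤ 1 := by
      rw [div_le_one (by positivity)]
      exact_mod_cast Nat.one_le_iff_ne_zero.mpr (by omega)
    linarith
  set δ := min (ε i j₀) (ε i₀ j) with hδ
  have hδpos : 0 < δ := lt_min (hεpos i j₀) (hεpos i₀ j)
  have hδ1 : δ ≤ 1 := le_of_lt ((min_le_left _ _).trans_lt (hεlt i j₀))
  rw [cutCap_gen _ S hs ht]
  set A := univ.filter fun i : Fin k => BNode.x i ∈ S with hA
  set B := univ.filter fun j : Fin k => BNode.y j ∈ S with hB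
  have hAk : (A.card : ℝ) ≤ k := by
    exact_mod_cast (Finset.card_le_univ A).trans_eq (by simp)
  have hBk : (B.card : ℝ) ≤ k := by
    exact_mod_cast (Finset.card_le_univ B).trans_eq (by simp)
  have hAc : ((Aᶜ.card : ℕ) : ℝ) = k - A.card := by
    rw [Finset.card_compl, Nat.cast_sub (by simpa using Finset.card_le_univ A)]; simp
  have hBc : ((Bᶜ.card : ℕ) : ℝ) = k - B.card := by
    rw [Finset.card_compl, Nat.cast_sub (by simpa using Finset.card_le_univ B)]; simp
  -- turn nested sums into sums over products
  rw [← Finset.sum_product' (f := fun i' j' => if i' = i ∧ j' = j then (0:ℝ) else 1 + ε i' j'),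
      ← Finset.sum_product' (f := fun j' i' => if i' = i ∧ j' = j then (0:ℝ) else 1 + ε i' j')]
  -- split off the deleted arc
  rw [sum_sub_single (A ×ˢ Bᶜ) _ (fun p => 1 + ε p.1 p.2) (i, j)
      (by rintro ⟨a, b⟩ _ hne
          have : ¬(a = i ∧ b = j) := by
            rintro ⟨rfl, rfl⟩; exact hne rfl
          simp [this]),
    sum_sub_single (B ×ˢ Aᶜ) _ (fun p => 1 + ε p.2 p.1) (j, i)
      (by rintro ⟨a, b⟩ _ hne
          have : ¬(b = i ∧ a = j) := by
            rintro ⟨rfl, rfl⟩; exact hne rfl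
          simp [this])]
  simp only [and_self, if_true, ite_true, sub_zero, eq_self_iff_true, and_true, true_and]
  have split1 : ∑ p ∈ A ×ˢ Bᶜ, ((1:ℝ) + ε p.1 p.2)
      = (A.card : ℝ) * ((k:ℝ) - B.card) + ∑ p ∈ A ×ˢ Bᶜ, ε p.1 p.2 := by
    rw [Finset.sum_add_distrib, Finset.sum_const, nsmul_eq_mul, mul_one,
      Finset.card_product, Nat.cast_mul, hBc]
  have split2 : ∑ p ∈ B ×ˢ Aᶜ, ((1:ℝ) + ε p.2 p.1)
      = (B.card : ℝ) * ((k:ℝ) - A.card) + ∑ p ∈ B ×ˢ Aᶜ, ε p.2 p.1 := by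
    rw [Finset.sum_add_distrib, Finset.sum_const, nsmul_eq_mul, mul_one,
      Finset.card_product, Nat.cast_mul, hAc]
  rw [split1, split2, hAc]
  have hS1nonneg : (0:ℝ) ≤ ∑ p ∈ A ×ˢ Bᶜ, ε p.1 p.2 :=
    Finset.sum_nonneg fun p _ => (hεpos p.1 p.2).le
  have hS2nonneg : (0:ℝ) ≤ ∑ p ∈ B ×ˢ Aᶜ, ε p.2 p.1 :=
    Finset.sum_nonneg fun p _ => (hεpos p.2 p.1).le
  by_cases hD1 : (i, j) ∈ A ×ˢ Bᶜ
  · rw [if_pos hD1]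
    obtain ⟨hiA, hjBc⟩ := Finset.mem_product.mp hD1
    have hjB : j ∉ B := Finset.mem_compl.mp hjBc
    have hD2 : (j, i) ∉ B ×ˢ Aᶜ := fun h => hjB (Finset.mem_product.mp h).1
    rw [if_neg hD2, sub_zero]
    by_cases hj₀B : j₀ ∈ B
    · by_cases hi₀A : i₀ ∈ A
      · -- (i₀, j) ∈ A ×ˢ Bᶜ gives an extra ε i₀ j ≥ δ
        have hq : ((i₀, j) : Fin k × Fin k) ∈ A ×ˢ Bᶜ :=
          Finset.mem_product.mpr ⟨hi₀A, hjBc⟩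
        have hne : ((i, j) : Fin k × Fin k) ≠ (i₀, j) :=
          fun h => hi₀ (Prod.ext_iff.mp h).1.symm
        have hpair : ε i j + ε i₀ j ≤ ∑ p ∈ A ×ˢ Bᶜ, ε p.1 p.2 := by
          have := pair_le_sum (f := fun p : Fin k × Fin k => ε p.1 p.2)
            (fun p _ => (hεpos p.1 p.2).le) hD1 hq hne
          simpa using this
        have hδ2 : δ ≤ ε i₀ j := min_le_right _ _
        nlinarith [mul_nonneg (Nat.cast_nonneg' B.card : (0:ℝ) ≤ B.card)
          (by linarith : (0:ℝ) ≤ (k:ℝ) - A.card)]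
      · -- b ≥ 1 and k - a ≥ 1
        have hb1 : (1:ℝ) ≤ B.card := by
          exact_mod_cast Finset.card_pos.mpr ⟨j₀, hj₀B⟩
        have hka1 : (1:ℝ) ≤ (k:ℝ) - A.card := by
          rw [← hAc]
          exact_mod_cast Finset.card_pos.mpr ⟨i₀, Finset.mem_compl.mpr hi₀A⟩
        have hsingle : ε i j ≤ ∑ p ∈ A ×ˢ Bᶜ, ε p.1 p.2 :=
          Finset.single_le_sum (f := fun p : Fin k × Fin k => ε p.1 p.2)
            (fun p _ => (hεpos p.1 p.2).le) hD1
        nlinarith [mul_le_mul hb1 hka1 (by linarith) (by positivity)]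
    · -- (i, j₀) ∈ A ×ˢ Bᶜ gives an extra ε i j₀ ≥ δ
      have hq : ((i, j₀) : Fin k × Fin k) ∈ A ×ˢ Bᶜ :=
        Finset.mem_product.mpr ⟨hiA, Finset.mem_compl.mpr hj₀B⟩
      have hne : ((i, j) : Fin k × Fin k) ≠ (i, j₀) :=
        fun h => hj₀ (Prod.ext_iff.mp h).2.symm
      have hpair : ε i j + ε i j₀ ≤ ∑ p ∈ A ×ˢ Bᶜ, ε p.1 p.2 := by
        have := pair_le_sum (f := fun p : Fin k × Fin k => ε p.1 p.2)
          (fun p _ => (hεpos p.1 p.2).le) hD1 hq hne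
        simpa using this
      have hδ2 : δ ≤ ε i j₀ := min_le_left _ _
      nlinarith [mul_nonneg (Nat.cast_nonneg' B.card : (0:ℝ) ≤ B.card)
        (by linarith : (0:ℝ) ≤ (k:ℝ) - A.card)]
  · rw [if_neg hD1, sub_zero]
    by_cases hD2 : (j, i) ∈ B ×ˢ Aᶜ
    · rw [if_pos hD2]
      obtain ⟨hjB, hiAc⟩ := Finset.mem_product.mp hD2
      have hb1 : (1:ℝ) ≤ B.card := by
        exact_mod_cast Finset.card_pos.mpr ⟨j, hjB⟩
      have hka1 : (1:ℝ) ≤ (k:ℝ) - A.card := by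
        rw [← hAc]
        exact_mod_cast Finset.card_pos.mpr ⟨i, hiAc⟩
      have hsingle : ε i j ≤ ∑ p ∈ B ×ˢ Aᶜ, ε p.2 p.1 :=
        Finset.single_le_sum (f := fun p : Fin k × Fin k => ε p.2 p.1)
          (fun p _ => (hεpos p.2 p.1).le) hD2
      nlinarith [mul_le_mul hb1 hka1 (by linarith) (by positivity)]
    · rw [if_neg hD2, sub_zero]
      have hP : (0:ℝ) ≤ (B.card:ℝ) * ((k:ℝ) - A.card) :=
        mul_nonneg (by positivity) (by linarith)
      have hid : (k:ℝ) * ((k:ℝ) - A.card) + (k:ℝ) * B.card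
          + ((A.card:ℝ) * ((k:ℝ) - B.card) + ∑ p ∈ A ×ˢ Bᶜ, ε p.1 p.2)
          + ((B.card:ℝ) * ((k:ℝ) - A.card) + ∑ p ∈ B ×ˢ Aᶜ, ε p.2 p.1)
          = (k:ℝ) * k + 2 * ((B.card:ℝ) * ((k:ℝ) - A.card))
            + (∑ p ∈ A ×ˢ Bᶜ, ε p.1 p.2) + (∑ p ∈ B ×ˢ Aᶜ, ε p.2 p.1) := by ring
      linarith [hP, hδ1, hS1nonneg, hS2nonneg, hid]

lemma cut_s (k : ℕ) (w : Fin k → Fin k → ℝ) :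
    cutCap (genCap k w) {BNode.s} = (k : ℝ) * k := by
  rw [cutCap_gen w {BNode.s} (Finset.mem_singleton_self _) (by simp)]
  have h1 : (univ.filter fun i : Fin k => BNode.x i ∈ ({BNode.s} : Finset (BNode k))) = ∅ := by
    simp
  have h2 : (univ.filter fun j : Fin k => BNode.y j ∈ ({BNode.s} : Finset (BNode k))) = ∅ := by
    simp
  rw [h1, h2]
  simp

lemma cut_sx {k : ℕ} (w : Fin k → Fin k → ℝ) (i : Fin k) (hk : 1 ≤ k) :
    cutCap (genCap k w) {BNode.s, BNode.x i} = (k : ℝ) * (k - 1) + ∑ j', w i j' := by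
  rw [cutCap_gen w _ (by simp) (by simp)]
  have h1 : (univ.filter fun i' : Fin k =>
      BNode.x i' ∈ ({BNode.s, BNode.x i} : Finset (BNode k))) = {i} := by
    ext a; simp [BNode.x.injEq]
  have h2 : (univ.filter fun j : Fin k =>
      BNode.y j ∈ ({BNode.s, BNode.x i} : Finset (BNode k))) = ∅ := by
    simp
  rw [h1, h2]
  have hcard : (({i} : Finset (Fin k))ᶜ.card : ℝ) = (k : ℝ) - 1 := by
    rw [Finset.card_compl, Nat.cast_sub (by simpa using Finset.card_le_univ {i})]
    simp
  simp [hcard]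


theorem bipartite_arcs_nontrivial_vitality (k : ℕ) (hk : 2 ≤ k)
    (ε : Fin k → Fin k → ℝ) (hε : ∀ i j, 0 < ε i j ∧ ε i j < 1 / k) (i j : Fin k) :
    -- `B - e` where `e = {xᵢ, yⱼ}` : both orientations of the edge are removed
    0 < minCut (Bcap k ε) BNode.s BNode.t -
          minCut (delArc (delArc (Bcap k ε) (BNode.x i, BNode.y j))
            (BNode.y j, BNode.x i)) BNode.s BNode.t ∧
      minCut (Bcap k ε) BNode.s BNode.t -
          minCut (delArc (delArc (Bcap k ε) (BNode.x i, BNode.y j))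
            (BNode.y j, BNode.x i)) BNode.s BNode.t < 1 ∧
      minCut (Bcap k ε) BNode.s BNode.t -
          minCut (delArc (delArc (Bcap k ε) (BNode.x i, BNode.y j))
            (BNode.y j, BNode.x i)) BNode.s BNode.t <
        Bcap k ε (BNode.x i) (BNode.y j) := by
  have hk0 : (0:ℝ) < k := by exact_mod_cast (by omega : 0 < k)
  have hεpos : ∀ a b, 0 < ε a b := fun a b => (hε a b).1
  obtain ⟨i₀, hi₀⟩ := Fintype.exists_ne_of_one_lt_card (by simp; omega) i
  obtain ⟨j₀, hj₀⟩ := Fintype.exists_ne_of_one_lt_card (by simp; omega) j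
  set δ := min (ε i j₀) (ε i₀ j) with hδdef
  have hδpos : 0 < δ := lt_min (hεpos i j₀) (hεpos i₀ j)
  rw [del_eq_gen, Bcap_eq_gen]
  set w1 := fun i' j' => if i' = i ∧ j' = j then (0:ℝ) else 1 + ε i' j' with hw1
  -- the cut sets
  set M0 := {r | ∃ S : Finset (BNode k), BNode.s ∈ S ∧ BNode.t ∉ S ∧
      r = cutCap (genCap k (fun i j => 1 + ε i j)) S} with hM0
  set M1 := {r | ∃ S : Finset (BNode k), BNode.s ∈ S ∧ BNode.t ∉ S ∧
      r = cutCap (genCap k w1) S} with hM1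
  have hM0ne : M0.Nonempty := ⟨_, {BNode.s}, Finset.mem_singleton_self _, by simp, rfl⟩
  have hM1ne : M1.Nonempty := ⟨_, {BNode.s}, Finset.mem_singleton_self _, by simp, rfl⟩
  have hM0lb : ∀ r ∈ M0, (k:ℝ) * k ≤ r := by
    rintro r ⟨S, hs, ht, rfl⟩
    exact lower0 ε (fun a b => (hεpos a b).le) S hs ht
  have hM1lb : ∀ r ∈ M1, (k:ℝ) * k - 1 + δ ≤ r := by
    rintro r ⟨S, hs, ht, rfl⟩
    exact lower1 hk ε hε i j i₀ j₀ hi₀ hj₀ S hs ht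
  have hmin0 : minCut (genCap k (fun i j => 1 + ε i j)) BNode.s BNode.t = (k:ℝ) * k := by
    unfold minCut
    refine le_antisymm ?_ (le_csInf hM0ne hM0lb)
    refine csInf_le ⟨(k:ℝ) * k, hM0lb⟩ ?_
    exact ⟨{BNode.s}, Finset.mem_singleton_self _, by simp, (cut_s k _).symm⟩
  have hupper1 : minCut (genCap k w1) BNode.s BNode.t ≤ (k:ℝ) * (k - 1) + ∑ j', w1 i j' := by
    unfold minCut
    refine csInf_le ⟨(k:ℝ) * k - 1 + δ, hM1lb⟩ ?_
    exact ⟨{BNode.s, BNode.x i}, by simp, by simp, (cut_sx w1 i (by omega)).symm⟩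
  have hlower1 : (k:ℝ) * k - 1 + δ ≤ minCut (genCap k w1) BNode.s BNode.t :=
    le_csInf hM1ne hM1lb
  -- evaluate the sum ∑ j', w1 i j'
  have hsum : ∑ j', w1 i j' = (∑ j', (1 + ε i j')) - (1 + ε i j) := by
    rw [sum_sub_single univ _ (fun j' => 1 + ε i j') j
      (fun b _ hb => by simp [hw1, hb])]
    simp [hw1]
  have hsumlt : ∑ j', w1 i j' < (k:ℝ) - ε i j := by
    have h1 : ∑ j' : Fin k, (1 + ε i j') < ∑ j' : Fin k, ((1:ℝ) + 1 / k) := by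
      refine Finset.sum_lt_sum_of_nonempty ⟨⟨0, by omega⟩, Finset.mem_univ _⟩ fun j' _ => ?_
      linarith [(hε i j').2]
    rw [Finset.sum_const, Finset.card_univ, Fintype.card_fin, nsmul_eq_mul] at h1
    have : (k:ℝ) * (1 + 1 / k) = k + 1 := by field_simp
    rw [hsum]; rw [this] at h1
    linarith
  have hupper1' : minCut (genCap k w1) BNode.s BNode.t < (k:ℝ) * k - ε i j := by
    have : (k:ℝ) * (k - 1) + ((k:ℝ) - ε i j) = (k:ℝ) * k - ε i j := by ring
    linarith
  refine ⟨?_, ?_, ?_⟩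
  · rw [hmin0]; linarith [hεpos i j]
  · rw [hmin0]; linarith
  · rw [hmin0]
    have hB : genCap k (fun i' j' => 1 + ε i' j') (BNode.x i) (BNode.y j) = 1 + ε i j := rfl
    rw [hB]
    linarith [hεpos i j]
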